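/- There is a constant c > 0 depending only on n such that for every strictly positive Schwartz function T on ℝ^n with ∫_{ℝ^n} T(x) dx = 1, one has ∫_{ℝ^n} |x| T(x) dx ≥ c · exp( −(1/n) ∫_{ℝ^n} T(x) log T(x) dx ). -/

import Mathlib

open MeasureTheory
open Real in

noncomputable section

namespace CarlesonAux

variable {n : ℕ}

local notation "En" => EuclideanSpace ℝ (Fin n)

lemma finrank_En : Module.finrank ℝ (EuclideanSpace ℝ (Fin n)) = n := by
  simp [finrank_euclideanSpace]

/-- Polynomial decay of Schwartz maps. -/
lemma decay_bound (T : SchwartzMap En ℝ) (k : ℕ) :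
    ∃ C : ℝ, 0 < C ∧ ∀ x : En, |T x| ≤ C * (1 + ‖x‖) ^ (-(k : ℝ)) := by
  set C := 2 ^ k *
    (Finset.Iic ((k, 0) : ℕ × ℕ)).sup (fun m => SchwartzMap.seminorm ℝ m.1 m.2) T with hC
  have hC0 : 0 ≤ C := by positivity
  refine ⟨C + 1, by positivity, fun x => ?_⟩
  have h := SchwartzMap.one_add_le_sup_seminorm_apply (𝕜 := ℝ) (m := (k, 0))
    le_rfl le_rfl T x
  rw [norm_iteratedFDeriv_zero] at h
  have h1 : (0 : ℝ) < 1 + ‖x‖ := by positivity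
  have h2 : (1 + ‖x‖) ^ (-(k : ℝ)) = ((1 + ‖x‖) ^ k)⁻¹ := by
    rw [rpow_neg h1.le, rpow_natCast]
  rw [h2, ← div_eq_mul_inv, le_div_iff₀ (by positivity)]
  calc |T x| * (1 + ‖x‖) ^ k = (1 + ‖x‖) ^ k * ‖T x‖ := by
        rw [Real.norm_eq_abs]; ring
    _ ≤ C := h
    _ ≤ C + 1 := by linarith

lemma integrable_of_decay (hn : 0 < n) {f : En → ℝ} (hf : Continuous f)
    {C : ℝ} (hC : ∀ x : En, |f x| ≤ C * (1 + ‖x‖) ^ (-((n : ℝ) + 1))) :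
    Integrable f := by
  have hbase : Integrable (fun x : En => (1 + ‖x‖) ^ (-((n : ℝ) + 1))) := by
    apply integrable_one_add_norm
    rw [finrank_En]; linarith
  refine (hbase.const_mul C).mono' hf.aestronglyMeasurable ?_
  filter_upwards with x
  have := hC x
  rwa [Real.norm_eq_abs]

lemma integrable_norm_mul (T : SchwartzMap En ℝ) (hT : ∀ x, 0 < T x) :
    Integrable (fun x : En => ‖x‖ * T x) := by
  have h := T.integrable_pow_mul (volume) 1
  simp only [pow_one] at h
  refine h.congr ?_
  filter_upwards with x
  rw [Real.norm_eq_abs, abs_of_pos (hT x)]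

lemma integrable_sqrt (hn : 0 < n) (T : SchwartzMap En ℝ) (hT : ∀ x, 0 < T x) :
    Integrable (fun x : En => Real.sqrt (T x)) := by
  obtain ⟨C, hC0, hC⟩ := decay_bound T (2 * (n + 1))
  refine integrable_of_decay hn
    (Real.continuous_sqrt.comp T.continuous) (C := Real.sqrt C) (fun x => ?_)
  have h1 : (0 : ℝ) < 1 + ‖x‖ := by positivity
  have h2 : Real.sqrt (C * (1 + ‖x‖) ^ (-(((2 * (n + 1) : ℕ)) : ℝ))) =
      Real.sqrt C * (1 + ‖x‖) ^ (-((n : ℝ) + 1)) := by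
    rw [Real.sqrt_mul hC0.le, Real.sqrt_eq_rpow ((1 + ‖x‖) ^ _), ← Real.rpow_mul h1.le]
    congr 1
    push_cast
    ring
  rw [abs_of_nonneg (Real.sqrt_nonneg _), ← h2]
  exact Real.sqrt_le_sqrt ((le_abs_self _).trans (hC x))

/-- Pointwise bound `|t log t| ≤ 2 √t + (log A) t` for `0 < t ≤ A`, `1 ≤ A`. -/
lemma abs_mul_log_le {t A : ℝ} (ht : 0 < t) (htA : t ≤ A) (hA : 1 ≤ A) :
    |t * Real.log t| ≤ 2 * Real.sqrt t + Real.log A * t := by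
  have hlogA : 0 ≤ Real.log A := Real.log_nonneg hA
  rcases le_or_gt t 1 with h1 | h1
  · have hlog : Real.log t ≤ 0 := Real.log_nonpos ht.le h1
    have habs : |t * Real.log t| = t * (-Real.log t) := by
      rw [abs_of_nonpos (mul_nonpos_of_nonneg_of_nonpos ht.le hlog)]; ring
    have hs : 0 < Real.sqrt t := Real.sqrt_pos.2 ht
    -- -log t = 2 * (- log (sqrt t)) and -log (sqrt t) = log (1/sqrt t) ≤ 1/sqrt t - 1
    have hsq : Real.sqrt t * Real.sqrt t = t := Real.mul_self_sqrt ht.le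
    have hlog2 : Real.log t = 2 * Real.log (Real.sqrt t) := by
      rw [show (2:ℝ) * Real.log (Real.sqrt t) = Real.log (Real.sqrt t ^ 2) by
        rw [Real.log_pow]; push_cast; ring]
      rw [sq, hsq]
    have hkey : Real.log ((Real.sqrt t)⁻¹) ≤ (Real.sqrt t)⁻¹ - 1 :=
      Real.log_le_sub_one_of_pos (by positivity)
    rw [Real.log_inv] at hkey
    have : -Real.log t ≤ 2 * (Real.sqrt t)⁻¹ := by
      rw [hlog2]; nlinarith
    have h2 : t * (-Real.log t) ≤ t * (2 * (Real.sqrt t)⁻¹) := by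
      apply mul_le_mul_of_nonneg_left this ht.le
    have h3 : t * (2 * (Real.sqrt t)⁻¹) = 2 * Real.sqrt t := by
      field_simp
      nlinarith
    rw [habs]
    nlinarith [mul_nonneg hlogA ht.le]
  · have hlog : 0 ≤ Real.log t := Real.log_nonneg h1.le
    have habs : |t * Real.log t| = t * Real.log t := abs_of_nonneg (by positivity)
    have : Real.log t ≤ Real.log A := Real.log_le_log ht htA
    rw [habs]
    nlinarith [Real.sqrt_nonneg t, mul_le_mul_of_nonneg_left this ht.le]

lemma integrable_mul_log (hn : 0 < n) (T : SchwartzMap En ℝ) (hT : ∀ x, 0 < T x) :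
    Integrable (fun x : En => T x * Real.log (T x)) := by
  obtain ⟨C, hC0, hC⟩ := decay_bound T 0
  set A := max C 1 with hA
  have hA1 : 1 ≤ A := le_max_right _ _
  have hTA : ∀ x : En, T x ≤ A := by
    intro x
    have := hC x
    simp only [Nat.cast_zero, neg_zero, Real.rpow_zero, mul_one] at this
    exact ((le_abs_self _).trans this).trans (le_max_left _ _)
  have hdom : Integrable (fun x : En => 2 * Real.sqrt (T x) + Real.log A * T x) :=
    ((integrable_sqrt hn T hT).const_mul 2).add (T.integrable.const_mul _)
  have hmeas : AEStronglyMeasurable (fun x : En => T x * Real.log (T x)) volume := by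
    apply Continuous.aestronglyMeasurable
    exact T.continuous.mul (Real.continuousOn_log.comp_continuous T.continuous
      (fun x => by simp [(hT x).ne']))
  refine hdom.mono' hmeas ?_
  filter_upwards with x
  rw [Real.norm_eq_abs]
  exact abs_mul_log_le (hT x) (hTA x) hA1

/-- Gibbs' pointwise inequality. -/
lemma gibbs_pointwise {t g : ℝ} (ht : 0 < t) (hg : 0 < g) :
    t - g ≤ t * Real.log t - t * Real.log g := by
  have h := Real.log_le_sub_one_of_pos (div_pos hg ht)
  rw [Real.log_div hg.ne' ht.ne'] at h
  have h2 : t * (Real.log g - Real.log t) ≤ t * (g / t - 1) :=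
    mul_le_mul_of_nonneg_left h ht.le
  have h3 : t * (g / t - 1) = g - t := by field_simp
  nlinarith

/-- integrability of `exp (-(l * ‖x‖))`. -/
lemma integrable_exp_neg (hn : 0 < n) {l : ℝ} (hl : 0 < l) :
    Integrable (fun x : En => Real.exp (-(l * ‖x‖))) := by
  set K : ℝ := 2 ^ (n + 1) * (1 + (Nat.factorial (n + 1) : ℝ) / l ^ (n + 1)) with hK
  apply integrable_of_decay hn (by continuity) (C := K)
  intro x
  set t := ‖x‖ with ht
  have ht0 : 0 ≤ t := norm_nonneg x
  have h1 : (0 : ℝ) < 1 + t := by positivity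
  rw [abs_of_nonneg (Real.exp_pos _).le, Real.rpow_neg h1.le, ← div_eq_mul_inv,
    le_div_iff₀ (by positivity)]
  have hpow : (1 + t) ^ (((n : ℝ) + 1)) = ((1 + t) ^ (n + 1) : ℝ) := by
    rw [← Real.rpow_natCast (1 + t) (n + 1)]; push_cast; ring_nf
  rw [hpow]
  -- key : exp (-(l t)) * (1+t)^(n+1) ≤ K
  have hexp : (l * t) ^ (n + 1) / (Nat.factorial (n + 1) : ℝ) ≤ Real.exp (l * t) :=
    Real.pow_div_factorial_le_exp (x := l * t) (by positivity) (n + 1)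
  have hexp1 : Real.exp (-(l * t)) ≤ 1 := Real.exp_le_one_iff.2 (by nlinarith)
  have hF : (0:ℝ) < (Nat.factorial (n + 1) : ℝ) := by positivity
  have hexp2 : Real.exp (-(l * t)) * t ^ (n + 1) ≤ (Nat.factorial (n + 1) : ℝ) / l ^ (n + 1) := by
    have h1 : (l * t) ^ (n + 1) ≤ Real.exp (l * t) * (Nat.factorial (n + 1) : ℝ) := by
      rw [div_le_iff₀ hF] at hexp; linarith
    rw [Real.exp_neg, inv_mul_le_iff₀ (Real.exp_pos _), ← mul_div_assoc,
      le_div_iff₀ (by positivity)]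
    calc t ^ (n + 1) * l ^ (n + 1) = (l * t) ^ (n + 1) := by rw [mul_pow]; ring
      _ ≤ Real.exp (l * t) * (Nat.factorial (n + 1) : ℝ) := h1
  have hbin : ((1 + t) ^ (n + 1) : ℝ) ≤ 2 ^ (n + 1) * (1 + t ^ (n + 1)) := by
    rcases le_or_gt t 1 with h | h
    · calc ((1 + t) ^ (n + 1) : ℝ) ≤ 2 ^ (n + 1) := by
            apply pow_le_pow_left₀ (by linarith) (by linarith)
        _ ≤ 2 ^ (n + 1) * (1 + t ^ (n + 1)) := by
            nlinarith [pow_nonneg ht0 (n + 1), pow_pos (by norm_num : (0:ℝ) < 2) (n+1)]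
    · calc ((1 + t) ^ (n + 1) : ℝ) ≤ (2 * t) ^ (n + 1) := by
            apply pow_le_pow_left₀ (by linarith) (by linarith)
        _ = 2 ^ (n + 1) * t ^ (n + 1) := mul_pow 2 t (n + 1)
        _ ≤ 2 ^ (n + 1) * (1 + t ^ (n + 1)) := by
            nlinarith [pow_pos (by norm_num : (0:ℝ) < 2) (n+1)]
  calc Real.exp (-(l * t)) * (1 + t) ^ (n + 1)
      ≤ Real.exp (-(l * t)) * (2 ^ (n + 1) * (1 + t ^ (n + 1))) := by
        apply mul_le_mul_of_nonneg_left hbin (Real.exp_pos _).le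
    _ = 2 ^ (n + 1) * (Real.exp (-(l * t)) + Real.exp (-(l * t)) * t ^ (n + 1)) := by ring
    _ ≤ 2 ^ (n + 1) * (1 + (Nat.factorial (n + 1) : ℝ) / l ^ (n + 1)) := by
        apply mul_le_mul_of_nonneg_left _ (by positivity)
        exact add_le_add hexp1 hexp2
    _ = K := rfl

/-- scaling of the exponential integral. -/
lemma integral_exp_neg_smul (hn : 0 < n) {l : ℝ} (hl : 0 < l) :
    ∫ x : En, Real.exp (-(l * ‖x‖)) = (l ^ n)⁻¹ * ∫ x : En, Real.exp (-‖x‖) := by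
  have h := MeasureTheory.Measure.integral_comp_smul (μ := (volume : Measure En))
    (fun y : En => Real.exp (-‖y‖)) l
  simp only [norm_smul, Real.norm_eq_abs, abs_of_pos hl, finrank_En, smul_eq_mul] at h
  rw [h, abs_of_pos (by positivity)]

lemma exp_base_pos (hn : 0 < n) : 0 < ∫ x : En, Real.exp (-‖x‖) := by
  refine (integral_pos_iff_support_of_nonneg (fun x => (Real.exp_pos _).le)
    (by simpa using integrable_exp_neg hn one_pos)).2 ?_
  have hsup : (Function.support fun x : En => Real.exp (-‖x‖)) = Set.univ := by
    ext x; simp [Real.exp_ne_zero]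
  rw [hsup]
  exact isOpen_univ.measure_pos volume ⟨0, trivial⟩



theorem main (hn : 0 < n) :
    ∃ c > (0 : ℝ), ∀ T : SchwartzMap (EuclideanSpace ℝ (Fin n)) ℝ,
      (∀ x, 0 < T x) → (∫ x, T x) = 1 →
      c * Real.exp (-(1 / n) * ∫ x, T x * Real.log (T x)) ≤ ∫ x, ‖x‖ * T x := by
  have hn' : (0 : ℝ) < n := by exact_mod_cast hn
  set I₁ : ℝ := ∫ x : En, Real.exp (-‖x‖) with hI₁
  have hI₁pos : 0 < I₁ := exp_base_pos hn
  set D : ℝ := (1 / n) * Real.log I₁ + 1 with hD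
  refine ⟨n * Real.exp (-D), by positivity, ?_⟩
  intro T hT hTint
  set M := ∫ x : En, ‖x‖ * T x with hM
  have hMint : Integrable (fun x : En => ‖x‖ * T x) := integrable_norm_mul T hT
  have hMpos : 0 < M := by
    refine (integral_pos_iff_support_of_nonneg
      (fun x => mul_nonneg (norm_nonneg _) (hT x).le) hMint).2 ?_
    have hsup : Function.support (fun x : En => ‖x‖ * T x) = {(0 : En)}ᶜ := by
      ext x
      simp [Function.mem_support, mul_ne_zero_iff, (hT x).ne', norm_eq_zero]
    rw [hsup]
    have hy : (EuclideanSpace.single (⟨0, hn⟩ : Fin n) (1 : ℝ)) ≠ 0 := by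
      rw [← norm_ne_zero_iff, EuclideanSpace.norm_single]
      norm_num
    exact isOpen_compl_singleton.measure_pos volume ⟨_, hy⟩
  set l : ℝ := n / M with hl
  have hlpos : 0 < l := by positivity
  set a : ℝ := l ^ n / I₁ with ha
  have hapos : 0 < a := by positivity
  have hg_int : Integrable (fun x : En => a * Real.exp (-(l * ‖x‖))) :=
    (integrable_exp_neg hn hlpos).const_mul a
  have hg_val : ∫ x : En, a * Real.exp (-(l * ‖x‖)) = 1 := by
    rw [integral_const_mul, integral_exp_neg_smul hn hlpos, ha]
    field_simp
    rfl
  have hTlogT : Integrable (fun x : En => T x * Real.log (T x)) :=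
    integrable_mul_log hn T hT
  have hTlin : Integrable (fun x : En => T x * (Real.log a - l * ‖x‖)) := by
    have heq : (fun x : En => T x * (Real.log a - l * ‖x‖)) =
        fun x => Real.log a * T x - l * (‖x‖ * T x) := by funext x; ring
    rw [heq]
    exact (T.integrable.const_mul _).sub (hMint.const_mul _)
  have hTlin_val : ∫ x : En, T x * (Real.log a - l * ‖x‖) = Real.log a - n := by
    have heq : (fun x : En => T x * (Real.log a - l * ‖x‖)) =
        fun x => Real.log a * T x - l * (‖x‖ * T x) := by funext x; ring
    rw [heq, integral_sub (T.integrable.const_mul _) (hMint.const_mul _),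
      integral_const_mul, integral_const_mul, hTint, ← hM]
    have : l * M = n := by rw [hl]; field_simp
    rw [this]; ring
  have key : ∫ x : En, (T x - a * Real.exp (-(l * ‖x‖))) ≤
      ∫ x : En, (T x * Real.log (T x) - T x * (Real.log a - l * ‖x‖)) := by
    apply integral_mono (T.integrable.sub hg_int) (hTlogT.sub hTlin)
    intro x
    have hgx : 0 < a * Real.exp (-(l * ‖x‖)) := by positivity
    have hgibbs := gibbs_pointwise (hT x) hgx
    have hlog : Real.log (a * Real.exp (-(l * ‖x‖))) = Real.log a - l * ‖x‖ := by
      rw [Real.log_mul hapos.ne' (Real.exp_ne_zero _), Real.log_exp]; ring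
    rw [hlog] at hgibbs
    exact hgibbs
  rw [integral_sub T.integrable hg_int, integral_sub hTlogT hTlin,
    hTint, hg_val, hTlin_val] at key
  -- key : 1 - 1 ≤ ∫ T log T - (log a - n)
  have hEnt : Real.log a - n ≤ ∫ x : En, T x * Real.log (T x) := by linarith
  have hla : Real.log a = n * Real.log l - Real.log I₁ := by
    rw [ha, Real.log_div (pow_ne_zero _ hlpos.ne') hI₁pos.ne', Real.log_pow]
  have hll : Real.log (M / n) = -Real.log l := by
    rw [← Real.log_inv]
    congr 1
    rw [hl]
    field_simp
  have h1 : -(1 / (n : ℝ)) * ∫ x : En, T x * Real.log (T x) ≤ Real.log (M / n) + D := by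
    have h2 : -(1 / (n : ℝ)) * ∫ x : En, T x * Real.log (T x) ≤
        -(1 / (n : ℝ)) * (Real.log a - n) := by
      have h3 : 0 < 1 / (n : ℝ) := by positivity
      nlinarith
    have h4 : -(1 / (n : ℝ)) * (Real.log a - n) = Real.log (M / n) + D := by
      rw [hla, hll, hD]
      field_simp
      ring
    linarith
  have hexp : Real.exp (-(1 / (n : ℝ)) * ∫ x : En, T x * Real.log (T x)) ≤
      (M / n) * Real.exp D := by
    calc Real.exp (-(1 / (n : ℝ)) * ∫ x : En, T x * Real.log (T x))
        ≤ Real.exp (Real.log (M / n) + D) := Real.exp_le_exp.2 h1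
      _ = (M / n) * Real.exp D := by rw [Real.exp_add, Real.exp_log (by positivity)]
  calc (n : ℝ) * Real.exp (-D) * Real.exp (-(1 / n) * ∫ x : En, T x * Real.log (T x))
      ≤ (n : ℝ) * Real.exp (-D) * ((M / n) * Real.exp D) :=
        mul_le_mul_of_nonneg_left hexp (by positivity)
    _ = M := by
        rw [Real.exp_neg]
        field_simp

end CarlesonAux


end

/-- **Carleson's inequality.** There is a constant `c > 0`, depending only on `n`, such that
every strictly positive Schwartz function `T` on `ℝ^n` with `∫ T = 1` satisfies
`∫ |x| T(x) dx ≥ c · exp(−(1/n) ∫ T log T)`. -/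
theorem carleson_inequality (n : ℕ) (hn : 0 < n) :
    ∃ c > (0 : ℝ), ∀ T : SchwartzMap (EuclideanSpace ℝ (Fin n)) ℝ,
      (∀ x, 0 < T x) → (∫ x, T x) = 1 →
      c * Real.exp (-(1 / n) * ∫ x, T x * Real.log (T x)) ≤ ∫ x, ‖x‖ * T x := by
  exact CarlesonAux.main hn
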